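/- Let X be a separable metrizable topological space with at least two points. Then every nonempty open subset of the countable power X^ℕ, with the product topology, contains a subset homeomorphic (in the subspace topology) to the Cantor space 2^ℕ. -/

import Mathlib

/-- If `X` is separable metrizable with at least two points, then every nonempty open
subset of `X^ℕ` contains a homeomorphic copy of the Cantor space. -/
theorem cantor_in_open_of_pow
    (X : Type*) [TopologicalSpace X] [TopologicalSpace.MetrizableSpace X]
    [TopologicalSpace.SeparableSpace X] [Nontrivial X] :
    ∀ U : Set (ℕ → X), IsOpen U → U.Nonempty →
      ∃ C : Set (ℕ → X), C ⊆ U ∧ Nonempty (↥C ≃ₜ (ℕ → Bool)) := by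
  intro U hU ⟨f, hf⟩
  obtain ⟨a, b, hab⟩ := exists_pair_ne X
  obtain ⟨I, u, hu, hsub⟩ := isOpen_pi_iff.mp hU f hf
  set N : ℕ := I.sup id + 1 with hN
  set φ : (ℕ → Bool) → (ℕ → X) :=
    fun g n => if n < N then f n else (bif g (n - N) then a else b) with hφ
  have hcont : Continuous φ := by
    apply continuous_pi
    intro n
    by_cases h : n < N
    · simpa [hφ, h] using continuous_const
    · simp only [hφ, if_neg h]
      exact (continuous_of_discreteTopology (α := Bool) (f := fun t => bif t then a else b)).comp (continuous_apply (n - N))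
  have hinj : Function.Injective φ := by
    intro g g' h
    funext k
    have := congrFun h (k + N)
    simp only [hφ, Nat.add_sub_cancel, if_neg (by omega : ¬ k + N < N)] at this
    cases hg : g k <;> cases hg' : g' k <;> simp [hg, hg'] at this <;> tauto
  have hrange : Set.range φ ⊆ U := by
    rintro _ ⟨g, rfl⟩
    apply hsub
    intro n hn
    have hnN : n < N := by
      have := Finset.le_sup (f := id) hn
      simp only [id] at this
      omega
    simpa [hφ, hnN] using (hu n hn).2
  have hemb : Topology.IsEmbedding φ :=
    (hcont.isClosedEmbedding hinj).toIsEmbedding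
  exact ⟨Set.range φ, hrange, ⟨hemb.toHomeomorph.symm⟩⟩
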